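/- Let n ≥ 1, s ∈ (0,1), 0 < λ ≤ Λ, let Ω ⊂ ℝⁿ be a bounded open set with C^{1,1} boundary, let q > 0, a ∈ C(Ω̄), and let u ∈ C(ℝⁿ) ∩ L¹_s(ℝⁿ) be a nontrivial viscosity solution of 𝓜⁻[u] + a(x)u^q = 0 in Ω with u ≥ 0 in Ω and u ≤ 0 in ℝⁿ∖Ω. Then every point x₀ ∈ Ω̄ at which u attains its maximum over Ω̄ satisfies x₀ ∈ Ω and a(x₀) > 0, i.e. x₀ ∈ Ω_a⁺ = {x ∈ Ω : a(x) > 0}. -/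

import Mathlib

open MeasureTheory Metric Set Filter RealInnerProductSpace

noncomputable section

/-- Euclidean space ℝⁿ. -/
abbrev Eu (n : ℕ) := EuclideanSpace ℝ (Fin n)

/-- A kernel `μ` in the class `𝓛_*`: measurable, with values in `[λ, Λ]` on the unit
sphere, and even. -/
def IsAdmissibleKernel (n : ℕ) (lam Lam : ℝ) (μ : Eu n → ℝ) : Prop :=
  Measurable μ ∧ (∀ θ : Eu n, ‖θ‖ = 1 → μ θ ∈ Set.Icc lam Lam) ∧ ∀ θ : Eu n, μ (-θ) = μ θ

/-- The integrand `(u(x+y) + u(x−y) − 2u(x)) μ(y/|y|) |y|^{−(n+2s)}`. -/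
def kernIntegrand (n : ℕ) (s : ℝ) (μ u : Eu n → ℝ) (x y : Eu n) : ℝ :=
  (u (x + y) + u (x - y) - 2 * u x) * μ (‖y‖⁻¹ • y) / ‖y‖ ^ ((n : ℝ) + 2 * s)

/-- The linear nonlocal operator `L_μ u(x)`. -/
def Lop (n : ℕ) (s : ℝ) (μ u : Eu n → ℝ) (x : Eu n) : ℝ :=
  (1 - s) * ∫ y, kernIntegrand n s μ u x y

/-- The Pucci extremal operator `𝓜⁺`. -/
def PucciSup (n : ℕ) (s lam Lam : ℝ) (u : Eu n → ℝ) (x : Eu n) : ℝ :=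
  ⨆ μ : {μ : Eu n → ℝ // IsAdmissibleKernel n lam Lam μ}, Lop n s μ.1 u x

/-- The Pucci extremal operator `𝓜⁻`. -/
def PucciInf (n : ℕ) (s lam Lam : ℝ) (u : Eu n → ℝ) (x : Eu n) : ℝ :=
  ⨅ μ : {μ : Eu n → ℝ // IsAdmissibleKernel n lam Lam μ}, Lop n s μ.1 u x

/-- Membership in `L¹_s(ℝⁿ)`. -/
def MemL1s (n : ℕ) (s : ℝ) (u : Eu n → ℝ) : Prop :=
  Integrable (fun x : Eu n => |u x| / (1 + ‖x‖ ^ ((n : ℝ) + 2 * s)))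

/-- The weighted norm `‖u‖_{L¹_s(ℝⁿ)}`. -/
def L1sNorm (n : ℕ) (s : ℝ) (u : Eu n → ℝ) : ℝ :=
  ∫ x : Eu n, |u x| / (1 + ‖x‖ ^ ((n : ℝ) + 2 * s))

/-- Viscosity supersolution `𝓜⁻[u] ≤ g` in `Ω` (the function `g` may incorporate
zeroth-order terms evaluated at `(x, u(x))`): every `C²` test function in `L¹_s`
touching `u` from below at a point of `Ω` satisfies `𝓜⁻[φ](x) ≤ g(x)`. -/
def ViscSupersol (n : ℕ) (s lam Lam : ℝ) (Ω : Set (Eu n)) (u g : Eu n → ℝ) : Prop :=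
  ∀ x ∈ Ω, ∀ φ : Eu n → ℝ, MemL1s n s φ → ContDiffAt ℝ 2 φ x →
    φ x = u x → (∀ y, φ y ≤ u y) → PucciInf n s lam Lam φ x ≤ g x

/-- Viscosity subsolution `𝓜⁻[u] ≥ g` in `Ω`. -/
def ViscSubsol (n : ℕ) (s lam Lam : ℝ) (Ω : Set (Eu n)) (u g : Eu n → ℝ) : Prop :=
  ∀ x ∈ Ω, ∀ φ : Eu n → ℝ, MemL1s n s φ → ContDiffAt ℝ 2 φ x →
    φ x = u x → (∀ y, u y ≤ φ y) → g x ≤ PucciInf n s lam Lam φ x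

/-- `C^{1,1}` boundary of a bounded open set, characterized by a uniform two-sided
(interior and exterior) ball condition, with `ν` the outward unit normal. -/
def HasC11Boundary (n : ℕ) (Ω : Set (Eu n)) : Prop :=
  ∃ r > 0, ∀ x ∈ frontier Ω, ∃ ν : Eu n, ‖ν‖ = 1 ∧
    Metric.ball (x - r • ν) r ⊆ Ω ∧ Metric.ball (x + r • ν) r ⊆ (closure Ω)ᶜ

/-- Lemma 4.1 (localizing lemma): a nontrivial nonnegative solution of
`𝓜⁻[u] + a(x)u^q = 0` in `Ω` with `u ≤ 0` outside `Ω` can attain its maximum over `Ω̄`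
only at interior points where the weight is positive. -/

lemma aux_integrableOn_rpow_ball (n : ℕ) {a : ℝ} (ha : -(n : ℝ) < a) :
    IntegrableOn (fun y : Eu n => ‖y‖ ^ a) (Metric.ball (0 : Eu n) 1) := by
  have hmeas : Measurable (fun y : Eu n => ‖y‖ ^ a) := by fun_prop
  have hnn : ∀ y : Eu n, 0 ≤ ‖y‖ ^ a := fun y => Real.rpow_nonneg (norm_nonneg y) a
  rcases le_or_gt 0 a with h0 | h0
  · have hc : IntegrableOn (fun _ : Eu n => (1 : ℝ)) (ball (0 : Eu n) 1) :=
      integrableOn_const measure_ball_lt_top.ne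
    refine hc.mono' hmeas.aestronglyMeasurable ?_
    filter_upwards [ae_restrict_mem measurableSet_ball] with y hy
    rw [Real.norm_eq_abs, abs_of_nonneg (hnn y)]
    exact Real.rpow_le_one (norm_nonneg y) (le_of_lt (mem_ball_zero_iff.1 hy)) h0
  · have ha0 : a ≠ 0 := ne_of_lt h0
    refine ⟨hmeas.aestronglyMeasurable, ?_⟩
    rw [HasFiniteIntegral, lintegral_enorm_of_nonneg hnn,
      lintegral_eq_lintegral_meas_le _ (ae_of_all _ hnn) hmeas.aemeasurable]
    set ν := volume.restrict (ball (0 : Eu n) 1) with hν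
    have hb : a⁻¹ * (n : ℝ) < -1 := by
      rw [inv_mul_eq_div, div_lt_iff_of_neg h0]
      linarith
    have key : ∀ t : ℝ, 1 < t →
        ν {y : Eu n | t ≤ ‖y‖ ^ a} ≤
          ENNReal.ofReal (t ^ (a⁻¹ * (n : ℝ))) * volume (ball (0 : Eu n) 1) := by
      intro t ht
      have ht0 : (0 : ℝ) < t := lt_trans one_pos ht
      have hsub : {y : Eu n | t ≤ ‖y‖ ^ a} ⊆ closedBall (0 : Eu n) (t ^ a⁻¹) := by
        intro y hy
        simp only [mem_setOf_eq] at hy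
        have hy0 : y ≠ 0 := by
          rintro rfl
          rw [norm_zero, Real.zero_rpow ha0] at hy
          linarith
        have hle : (‖y‖ ^ a) ^ a⁻¹ ≤ t ^ a⁻¹ :=
          Real.rpow_le_rpow_of_nonpos ht0 hy (le_of_lt (inv_neg''.2 h0))
        rw [← Real.rpow_mul (norm_nonneg y), mul_inv_cancel₀ ha0, Real.rpow_one] at hle
        exact mem_closedBall_zero_iff.2 hle
      calc ν {y : Eu n | t ≤ ‖y‖ ^ a}
          ≤ volume {y : Eu n | t ≤ ‖y‖ ^ a} := Measure.restrict_le_self _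
        _ ≤ volume (closedBall (0 : Eu n) (t ^ a⁻¹)) := measure_mono hsub
        _ = ENNReal.ofReal ((t ^ a⁻¹) ^ n) * volume (ball (0 : Eu n) 1) := by
            rw [Measure.addHaar_closedBall volume _ (Real.rpow_nonneg ht0.le _),
              finrank_euclideanSpace_fin]
        _ = ENNReal.ofReal (t ^ (a⁻¹ * (n : ℝ))) * volume (ball (0 : Eu n) 1) := by
            rw [← Real.rpow_natCast (t ^ a⁻¹) n, ← Real.rpow_mul ht0.le]
    calc ∫⁻ t in Ioi (0 : ℝ), ν {y : Eu n | t ≤ ‖y‖ ^ a}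
        ≤ ∫⁻ t in Ioc (0 : ℝ) 1 ∪ Ioi 1, ν {y : Eu n | t ≤ ‖y‖ ^ a} :=
          lintegral_mono_set Ioi_subset_Ioc_union_Ioi
      _ ≤ (∫⁻ t in Ioc (0 : ℝ) 1, ν {y : Eu n | t ≤ ‖y‖ ^ a}) +
            ∫⁻ t in Ioi (1 : ℝ), ν {y : Eu n | t ≤ ‖y‖ ^ a} := lintegral_union_le _ _ _
      _ < ⊤ := by
          refine ENNReal.add_lt_top.2 ⟨?_, ?_⟩
          · calc (∫⁻ _ in Ioc (0 : ℝ) 1, ν {y : Eu n | _ ≤ ‖y‖ ^ a})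
                ≤ ∫⁻ _ in Ioc (0 : ℝ) 1, volume (ball (0 : Eu n) 1) := by
                  refine setLIntegral_mono' measurableSet_Ioc fun t _ => ?_
                  calc ν {y : Eu n | t ≤ ‖y‖ ^ a} ≤ ν univ := measure_mono (subset_univ _)
                    _ = volume (ball (0 : Eu n) 1) := by
                        rw [hν, Measure.restrict_apply_univ]
              _ = volume (ball (0 : Eu n) 1) * volume (Ioc (0 : ℝ) 1) := setLIntegral_const _ _
              _ < ⊤ := ENNReal.mul_lt_top measure_ball_lt_top (by simp [Real.volume_Ioc])
          · calc (∫⁻ t in Ioi (1 : ℝ), ν {y : Eu n | t ≤ ‖y‖ ^ a})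
                ≤ ∫⁻ t in Ioi (1 : ℝ),
                    ENNReal.ofReal (t ^ (a⁻¹ * (n : ℝ))) * volume (ball (0 : Eu n) 1) :=
                  setLIntegral_mono' measurableSet_Ioi fun t ht => key t ht
              _ = (∫⁻ t in Ioi (1 : ℝ), ENNReal.ofReal (t ^ (a⁻¹ * (n : ℝ)))) *
                    volume (ball (0 : Eu n) 1) := lintegral_mul_const' _ _ measure_ball_lt_top.ne
              _ < ⊤ := ENNReal.mul_lt_top
                  (integrableOn_Ioi_rpow_of_lt hb one_pos).setLIntegral_lt_top
                  measure_ball_lt_top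

lemma aux_secondDiff_bound (n : ℕ) {φ : Eu n → ℝ} (hφ : Differentiable ℝ φ) {K : NNReal}
    (hK : LipschitzWith K (fderiv ℝ φ)) (x y : Eu n) :
    |φ (x + y) + φ (x - y) - 2 * φ x| ≤ 2 * K * ‖y‖ ^ 2 := by
  set G : ℝ → ℝ := fun t => φ (x + t • y) + φ (x + t • (-y)) with hG
  have hd : ∀ t : ℝ, HasDerivAt G
      (fderiv ℝ φ (x + t • y) y + fderiv ℝ φ (x + t • (-y)) (-y)) t := by
    intro t
    have h1 : HasDerivAt (fun t : ℝ => x + t • y) y t := by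
      simpa using ((hasDerivAt_id t).smul_const y).const_add x
    have h2 : HasDerivAt (fun t : ℝ => x + t • (-y)) (-y) t := by
      simpa using ((hasDerivAt_id t).smul_const (-y)).const_add x
    have hc1 := (hφ (x + t • y)).hasFDerivAt.comp_hasDerivAt t h1
    have hc2 := (hφ (x + t • (-y))).hasFDerivAt.comp_hasDerivAt t h2
    exact hc1.add hc2
  have hbound : ∀ t ∈ Ico (0 : ℝ) 1,
      ‖fderiv ℝ φ (x + t • y) y + fderiv ℝ φ (x + t • (-y)) (-y)‖ ≤ 2 * K * ‖y‖ ^ 2 := by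
    intro t ht
    have h1 : fderiv ℝ φ (x + t • (-y)) (-y) = -(fderiv ℝ φ (x + t • (-y)) y) := by
      rw [map_neg]
    rw [h1, ← sub_eq_add_neg, ← ContinuousLinearMap.sub_apply]
    calc ‖(fderiv ℝ φ (x + t • y) - fderiv ℝ φ (x + t • (-y))) y‖
        ≤ ‖fderiv ℝ φ (x + t • y) - fderiv ℝ φ (x + t • (-y))‖ * ‖y‖ :=
          ContinuousLinearMap.le_opNorm _ _
      _ ≤ (K * ‖(x + t • y) - (x + t • (-y))‖) * ‖y‖ := by
          have := hK.dist_le_mul (x + t • y) (x + t • (-y))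
          rw [dist_eq_norm] at this
          exact mul_le_mul_of_nonneg_right this (norm_nonneg _)
      _ ≤ 2 * K * ‖y‖ ^ 2 := by
          have hsimp : (x + t • y) - (x + t • (-y)) = (2 * t) • y := by
            rw [smul_neg]
            module
          rw [hsimp, norm_smul]
          simp only [Real.norm_eq_abs]
          have ht0 : |2 * t| ≤ 2 := by
            rw [abs_of_nonneg (by linarith [ht.1])]
            linarith [ht.2]
          have hKn : (0 : ℝ) ≤ K := K.coe_nonneg
          have hyn : (0 : ℝ) ≤ ‖y‖ := norm_nonneg y
          have h' : |2 * t| * ‖y‖ ≤ 2 * ‖y‖ := mul_le_mul_of_nonneg_right ht0 hyn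
          calc (K : ℝ) * (|2 * t| * ‖y‖) * ‖y‖
              ≤ (K : ℝ) * (2 * ‖y‖) * ‖y‖ :=
                mul_le_mul_of_nonneg_right (mul_le_mul_of_nonneg_left h' hKn) hyn
            _ = 2 * K * ‖y‖ ^ 2 := by ring
  have key : ‖G 1 - G 0‖ ≤ (2 * K * ‖y‖ ^ 2) * (1 - 0) := by
    refine norm_image_sub_le_of_norm_deriv_le_segment'
      (f := G) (f' := fun t => fderiv ℝ φ (x + t • y) y + fderiv ℝ φ (x + t • (-y)) (-y))
      (fun t _ => (hd t).hasDerivWithinAt) hbound 1 ?_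
    exact ⟨zero_le_one, le_refl 1⟩
  have hG1 : G 1 = φ (x + y) + φ (x - y) := by
    simp [hG, sub_eq_add_neg]
  have hG0 : G 0 = 2 * φ x := by
    simp [hG]
    ring
  rw [hG1, hG0] at key
  simpa [Real.norm_eq_abs] using key

private lemma div_le_div_of_nonneg_right' {a b c : ℝ} (h : a ≤ b) (hc : 0 < c) :
    a / c ≤ b / c := by gcongr

set_option maxHeartbeats 2000000 in
theorem stmt9 (n : ℕ) (hn : 1 ≤ n) (s lam Lam q : ℝ) (hs : s ∈ Set.Ioo (0:ℝ) 1)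
    (hlam : 0 < lam) (hlamLam : lam ≤ Lam) (hq : 0 < q)
    (Ω : Set (Eu n)) (hΩo : IsOpen Ω) (hΩb : Bornology.IsBounded Ω)
    (hΩ11 : HasC11Boundary n Ω)
    (a : Eu n → ℝ) (ha : ContinuousOn a (closure Ω))
    (u : Eu n → ℝ) (hu : Continuous u) (huL1 : MemL1s n s u)
    (hsub : ViscSubsol n s lam Lam Ω u (fun x => -(a x * u x ^ q)))
    (hsuper : ViscSupersol n s lam Lam Ω u (fun x => -(a x * u x ^ q)))
    (hnonneg : ∀ x ∈ Ω, 0 ≤ u x) (hext : ∀ x ∉ Ω, u x ≤ 0)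
    (hnontriv : ∃ x ∈ Ω, u x ≠ 0) :
    ∀ x₀ ∈ closure Ω, (∀ y ∈ closure Ω, u y ≤ u x₀) → x₀ ∈ Ω ∧ 0 < a x₀ := by
  intro x₀ hx₀cl hmax
  obtain ⟨x₁, hx₁Ω, hx₁ne⟩ := hnontriv
  have hMpos : 0 < u x₀ :=
    lt_of_lt_of_le (lt_of_le_of_ne (hnonneg x₁ hx₁Ω) (Ne.symm hx₁ne))
      (hmax x₁ (subset_closure hx₁Ω))
  have hx₀Ω : x₀ ∈ Ω := by
    by_contra h
    exact absurd hMpos (not_lt.2 (hext x₀ h))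
  refine ⟨hx₀Ω, ?_⟩
  have hs0 := hs.1
  have hs1 := hs.2
  set p : ℝ := (n : ℝ) + 2 * s with hp
  have hn0 : (0:ℝ) ≤ (n:ℝ) := Nat.cast_nonneg n
  have hppos : 0 < p := by rw [hp]; linarith
  have hnp : (n : ℝ) < p := by rw [hp]; linarith
  set M : ℝ := u x₀ with hMdef
  obtain ⟨R₀, hR₀⟩ := hΩb.subset_closedBall 0
  set R : ℝ := max R₀ 1 with hRdef
  have hR1 : (1 : ℝ) ≤ R := le_max_right _ _
  have hRpos : (0 : ℝ) < R := lt_of_lt_of_le one_pos hR1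
  have hΩR : closure Ω ⊆ closedBall (0 : Eu n) R :=
    closure_minimal (hR₀.trans (closedBall_subset_closedBall (le_max_left _ _))) isClosed_closedBall
  have hx₀R : ‖x₀‖ ≤ R := mem_closedBall_zero_iff.1 (hΩR hx₀cl)
  set f : ContDiffBump (0 : Eu n) := ⟨R, 2 * R, hRpos, by linarith⟩ with hfdef
  set φ : Eu n → ℝ := fun x => M * f x with hφdef
  have hφcont : Continuous φ := continuous_const.mul f.continuous
  have hφ2 : ContDiff ℝ 2 φ := contDiff_const.mul f.contDiff
  have hφdiff : Differentiable ℝ φ := hφ2.differentiable (by norm_num)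
  have hsupp : HasCompactSupport φ := by
    apply f.hasCompactSupport.mono
    intro x hx
    simp only [Function.mem_support] at hx ⊢
    intro h
    exact hx (by simp [hφdef, h])
  obtain ⟨K, hK⟩ := ContDiff.lipschitzWith_of_hasCompactSupport (hsupp.fderiv ℝ)
    (hφ2.fderiv_right (m := 1) (by norm_num)) one_ne_zero
  have hφnn : ∀ x, 0 ≤ φ x := fun x => mul_nonneg hMpos.le f.nonneg
  have hφle : ∀ x, φ x ≤ M := fun x => by
    have h := mul_le_mul_of_nonneg_left (f.le_one (x := x)) hMpos.le
    simpa using h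
  have hbump1 : ∀ x ∈ closure Ω, φ x = M := by
    intro x hx
    have h1 : f x = 1 := f.one_of_mem_closedBall (by exact hΩR hx)
    simp [hφdef, h1]
  have hφx₀M : φ x₀ = M := hbump1 x₀ hx₀cl
  have hφx₀ : φ x₀ = u x₀ := hφx₀M
  have hφge : ∀ y, u y ≤ φ y := by
    intro y
    by_cases hy : y ∈ Ω
    · rw [hbump1 y (subset_closure hy)]; exact hmax y (subset_closure hy)
    · exact le_trans (hext y hy) (hφnn y)
  have hφL1 : MemL1s n s φ := by
    show Integrable (fun x : Eu n => |φ x| / (1 + ‖x‖ ^ ((n : ℝ) + 2 * s))) volume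
    refine Continuous.integrable_of_hasCompactSupport ?_ ?_
    · refine Continuous.div (continuous_abs.comp hφcont)
        (continuous_const.add (continuous_norm.rpow_const fun x => Or.inr (by positivity)))
        fun x => ?_
      have : (0:ℝ) ≤ ‖x‖ ^ ((n : ℝ) + 2 * s) := Real.rpow_nonneg (norm_nonneg x) _
      positivity
    · apply hsupp.mono
      intro x hx
      simp only [Function.mem_support] at hx ⊢
      intro h
      exact hx (by rw [h]; simp)
  -- the second-difference function and its normalized version
  set D : Eu n → ℝ := fun y => φ (x₀ + y) + φ (x₀ - y) - 2 * φ x₀ with hDdef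
  set g : Eu n → ℝ := fun y => D y / ‖y‖ ^ p with hgdef
  have hDcont : Continuous D :=
    ((hφcont.comp (continuous_const.add continuous_id)).add
      (hφcont.comp (continuous_const.sub continuous_id))).sub continuous_const
  have hgmeas : Measurable g := by
    apply Measurable.div hDcont.measurable
    fun_prop
  have hD0 : D 0 = 0 := by
    show φ (x₀ + 0) + φ (x₀ - 0) - 2 * φ x₀ = 0
    rw [add_zero, sub_zero]; ring
  have hDnonpos : ∀ y, D y ≤ 0 := fun y => by
    have h1 := hφle (x₀ + y); have h2 := hφle (x₀ - y)
    show φ (x₀ + y) + φ (x₀ - y) - 2 * φ x₀ ≤ 0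
    rw [hφx₀M]; linarith
  have hDlb : ∀ y, -(2*M) ≤ D y := fun y => by
    have h1 := hφnn (x₀ + y); have h2 := hφnn (x₀ - y)
    show -(2*M) ≤ φ (x₀ + y) + φ (x₀ - y) - 2 * φ x₀
    rw [hφx₀M]; linarith
  have hDabs : ∀ y, |D y| ≤ 2*M := fun y =>
    abs_le.2 ⟨hDlb y, le_trans (hDnonpos y) (by positivity)⟩
  have hDsq : ∀ y, |D y| ≤ 2 * K * ‖y‖ ^ 2 := fun y => aux_secondDiff_bound n hφdiff hK x₀ y
  have hgnonpos : ∀ y, g y ≤ 0 := fun y =>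
    div_nonpos_of_nonpos_of_nonneg (hDnonpos y) (Real.rpow_nonneg (norm_nonneg y) p)
  have hgabs : ∀ y, |g y| = |D y| / ‖y‖ ^ p := fun y => by
    show |D y / ‖y‖ ^ p| = _
    rw [abs_div, abs_of_nonneg (Real.rpow_nonneg (norm_nonneg y) p)]
  have hgint : Integrable g := by
    rw [← integrableOn_univ, ← union_compl_self (ball (0:Eu n) 1)]
    apply IntegrableOn.union
    · have hmaj : IntegrableOn (fun y : Eu n => 2 * (K:ℝ) * ‖y‖ ^ (2 - p)) (ball (0:Eu n) 1) :=
        (aux_integrableOn_rpow_ball n (show -(n:ℝ) < 2 - p by rw [hp]; linarith)).const_mul _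
      refine hmaj.mono' hgmeas.aestronglyMeasurable (ae_of_all _ fun y => ?_)
      rw [Real.norm_eq_abs, hgabs y]
      rcases eq_or_ne y 0 with rfl | hy0
      · rw [hD0]
        simp only [abs_zero, zero_div]
        positivity
      · have hny : 0 < ‖y‖ := norm_pos_iff.2 hy0
        have h2 : ‖y‖ ^ (2 - p) = ‖y‖ ^ (2:ℕ) / ‖y‖ ^ p := by
          rw [← Real.rpow_natCast ‖y‖ 2, ← Real.rpow_sub hny]
          norm_num
        rw [h2, ← mul_div_assoc]
        have hden : 0 < ‖y‖ ^ p := Real.rpow_pos_of_pos hny p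
        exact div_le_div_of_nonneg_right' (hDsq y) hden
    · have hmaj : Integrable (fun y : Eu n => (2*M*2^p) * (1+‖y‖)^(-p)) :=
        (integrable_one_add_norm (by rw [finrank_euclideanSpace_fin]; exact hnp)).const_mul _
      refine hmaj.integrableOn.mono' hgmeas.aestronglyMeasurable ?_
      filter_upwards [ae_restrict_mem measurableSet_ball.compl] with y hy
      have h1y : 1 ≤ ‖y‖ := by
        simp only [mem_compl_iff, mem_ball_zero_iff, not_lt] at hy
        exact hy
      have hny : 0 < ‖y‖ := lt_of_lt_of_le one_pos h1y
      rw [Real.norm_eq_abs, hgabs y]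
      have hcomp : (1 + ‖y‖) ^ p ≤ 2 ^ p * ‖y‖ ^ p := by
        calc (1+‖y‖)^p ≤ (2*‖y‖)^p :=
              Real.rpow_le_rpow (by positivity) (by linarith) hppos.le
          _ = 2^p * ‖y‖^p := Real.mul_rpow (by norm_num) (norm_nonneg y)
      have hpos1 : 0 < ‖y‖ ^ p := Real.rpow_pos_of_pos hny p
      have hpos2 : 0 < (1+‖y‖) ^ p := Real.rpow_pos_of_pos (by positivity) p
      rw [Real.rpow_neg (by positivity), ← div_eq_mul_inv, div_le_div_iff₀ hpos1 hpos2]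
      have hDy := hDabs y
      calc |D y| * (1+‖y‖)^p ≤ (2*M) * (2^p * ‖y‖^p) :=
            mul_le_mul hDy hcomp (by positivity) (by positivity)
        _ = 2*M*2^p*‖y‖^p := by ring
  -- kernel comparison
  have hθ : ∀ y : Eu n, y ≠ 0 → ‖(‖y‖⁻¹ • y : Eu n)‖ = 1 := fun y hy => by
    rw [norm_smul, norm_inv, norm_norm, inv_mul_cancel₀ (norm_ne_zero_iff.2 hy)]
  have hker : ∀ (μ : Eu n → ℝ), IsAdmissibleKernel n lam Lam μ → ∀ y,
      Lam * g y ≤ kernIntegrand n s μ φ x₀ y ∧ kernIntegrand n s μ φ x₀ y ≤ lam * g y := by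
    intro μ hμ y
    rcases eq_or_ne y 0 with rfl | hy0
    · have hz : kernIntegrand n s μ φ x₀ 0 = 0 := by
        show (φ (x₀ + 0) + φ (x₀ - 0) - 2 * φ x₀) * μ (‖(0:Eu n)‖⁻¹ • (0:Eu n)) /
          ‖(0:Eu n)‖ ^ ((n:ℝ) + 2*s) = 0
        have h0 : φ (x₀ + 0) + φ (x₀ - 0) - 2 * φ x₀ = 0 := by
          rw [add_zero, sub_zero]; ring
        rw [h0, zero_mul, zero_div]
      have hgz : g 0 = 0 := by
        show D 0 / ‖(0:Eu n)‖ ^ p = 0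
        rw [hD0, zero_div]
      rw [hz, hgz]
      simp
    · have hny : 0 < ‖y‖ := norm_pos_iff.2 hy0
      have hden : 0 < ‖y‖ ^ p := Real.rpow_pos_of_pos hny p
      obtain ⟨hμl, hμu⟩ := hμ.2.1 _ (hθ y hy0)
      have hkeq : kernIntegrand n s μ φ x₀ y = D y * μ (‖y‖⁻¹ • y) / ‖y‖ ^ p := rfl
      have hgeq : g y = D y / ‖y‖ ^ p := rfl
      have hDy := hDnonpos y
      constructor
      · have hnum : Lam * D y ≤ D y * μ (‖y‖⁻¹ • y) := by
          nlinarith [mul_nonneg (neg_nonneg.2 hDy) (sub_nonneg.2 hμu)]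
        calc Lam * g y = (Lam * D y) / ‖y‖ ^ p := by rw [hgeq, mul_div_assoc]
          _ ≤ (D y * μ (‖y‖⁻¹ • y)) / ‖y‖ ^ p := div_le_div_of_nonneg_right' hnum hden
          _ = kernIntegrand n s μ φ x₀ y := hkeq.symm
      · have hnum : D y * μ (‖y‖⁻¹ • y) ≤ lam * D y := by
          nlinarith [mul_nonneg (neg_nonneg.2 hDy) (sub_nonneg.2 hμl)]
        calc kernIntegrand n s μ φ x₀ y = (D y * μ (‖y‖⁻¹ • y)) / ‖y‖ ^ p := hkeq
          _ ≤ (lam * D y) / ‖y‖ ^ p := div_le_div_of_nonneg_right' hnum hden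
          _ = lam * g y := by rw [hgeq, mul_div_assoc]
  have hkint : ∀ (μ : Eu n → ℝ), IsAdmissibleKernel n lam Lam μ →
      Integrable (fun y => kernIntegrand n s μ φ x₀ y) := by
    intro μ hμ
    have hmeasμ : Measurable fun y : Eu n => μ (‖y‖⁻¹ • y) :=
      hμ.1.comp ((measurable_norm.inv).smul measurable_id)
    have hmeask : Measurable fun y => kernIntegrand n s μ φ x₀ y := by
      show Measurable fun y => D y * μ (‖y‖⁻¹ • y) / ‖y‖ ^ p
      apply Measurable.div (hDcont.measurable.mul hmeasμ)
      fun_prop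
    refine Integrable.mono' (hgint.abs.const_mul Lam) hmeask.aestronglyMeasurable
      (ae_of_all _ fun y => ?_)
    have h1 := (hker μ hμ y).1
    have h2 := (hker μ hμ y).2
    have hknp : kernIntegrand n s μ φ x₀ y ≤ 0 :=
      le_trans h2 (mul_nonpos_of_nonneg_of_nonpos hlam.le (hgnonpos y))
    rw [Real.norm_eq_abs, abs_of_nonpos hknp, abs_of_nonpos (hgnonpos y)]
    linarith
  -- strict negativity of the integral of g
  set A : Set (Eu n) := closedBall (0:Eu n) (5*R) \ ball (0:Eu n) (4*R) with hAdef
  have hAmeas : MeasurableSet A := measurableSet_closedBall.diff measurableSet_ball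
  have hgA : ∀ y ∈ A, g y ≤ -(2*M) / (5*R)^p := by
    intro y hy
    obtain ⟨hy5, hy4⟩ := hy
    rw [mem_closedBall_zero_iff] at hy5
    rw [mem_ball_zero_iff, not_lt] at hy4
    have hb1 : φ (x₀ + y) = 0 := by
      have h : ‖y‖ ≤ ‖x₀ + y‖ + ‖x₀‖ := by
        calc ‖y‖ = ‖(x₀ + y) - x₀‖ := by rw [add_sub_cancel_left]
          _ ≤ ‖x₀ + y‖ + ‖x₀‖ := norm_sub_le _ _
      have hdist : f.rOut ≤ dist (x₀ + y) 0 := by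
        rw [dist_zero_right]
        show 2*R ≤ ‖x₀ + y‖
        linarith
      simp [hφdef, f.zero_of_le_dist hdist]
    have hb2 : φ (x₀ - y) = 0 := by
      have h : ‖y‖ ≤ ‖x₀‖ + ‖x₀ - y‖ := by
        calc ‖y‖ = ‖x₀ - (x₀ - y)‖ := by rw [sub_sub_cancel]
          _ ≤ ‖x₀‖ + ‖x₀ - y‖ := norm_sub_le _ _
      have hdist : f.rOut ≤ dist (x₀ - y) 0 := by
        rw [dist_zero_right]
        show 2*R ≤ ‖x₀ - y‖
        linarith
      simp [hφdef, f.zero_of_le_dist hdist]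
    have hDy : D y = -(2*M) := by
      show φ (x₀ + y) + φ (x₀ - y) - 2 * φ x₀ = -(2*M)
      rw [hb1, hb2, hφx₀M]; ring
    have hgy : g y = -(2*M) / ‖y‖ ^ p := by
      show D y / ‖y‖ ^ p = _
      rw [hDy]
    rw [hgy]
    have hyn : (0:ℝ) < ‖y‖ := by linarith
    have hyp : 0 < ‖y‖ ^ p := Real.rpow_pos_of_pos hyn p
    have h5p : 0 < (5*R) ^ p := Real.rpow_pos_of_pos (by linarith) p
    rw [div_le_div_iff₀ hyp h5p]
    have hle : ‖y‖ ^ p ≤ (5*R) ^ p := Real.rpow_le_rpow (norm_nonneg y) hy5 hppos.le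
    nlinarith
  have hAfin : volume A < ⊤ := lt_of_le_of_lt (measure_mono diff_subset) measure_closedBall_lt_top
  have hApos : 0 < volume A := by
    set e : Eu n := EuclideanSpace.single (⟨0, hn⟩ : Fin n) (1:ℝ) with he
    have hne : ‖e‖ = 1 := by rw [he, EuclideanSpace.norm_single]; norm_num
    have hce : ‖(9/2*R) • e‖ = 9/2*R := by
      rw [norm_smul, hne, Real.norm_eq_abs, abs_of_pos (by linarith), mul_one]
    have hsub : ball ((9/2*R) • e) (R/2) ⊆ A := by
      intro z hz
      rw [mem_ball, dist_eq_norm] at hz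
      constructor
      · rw [mem_closedBall_zero_iff]
        calc ‖z‖ ≤ ‖z - (9/2*R)•e‖ + ‖(9/2*R)•e‖ := by
              simpa using norm_add_le (z - (9/2*R)•e) ((9/2*R)•e)
          _ ≤ 5*R := by rw [hce]; linarith
      · intro hzb
        rw [mem_ball_zero_iff] at hzb
        have h9 : 9/2*R ≤ ‖z‖ + ‖(9/2*R)•e - z‖ := by
          calc 9/2*R = ‖(9/2*R)•e‖ := hce.symm
            _ = ‖z + ((9/2*R)•e - z)‖ := by rw [add_sub_cancel]
            _ ≤ ‖z‖ + ‖(9/2*R)•e - z‖ := norm_add_le _ _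
        have h' : ‖(9/2*R)•e - z‖ < R/2 := by rw [norm_sub_rev]; exact hz
        linarith
    calc (0:ENNReal) < volume (ball ((9/2*R)•e) (R/2)) := measure_ball_pos _ _ (by linarith)
      _ ≤ volume A := measure_mono hsub
  have hvol : 0 < (volume A).toReal := ENNReal.toReal_pos hApos.ne' hAfin.ne
  have hIg : ∫ y, g y < 0 := by
    have hsplit : ∫ y, g y = (∫ y in A, g y) + ∫ y in Aᶜ, g y :=
      (integral_add_compl hAmeas hgint).symm
    have hc : ∫ y in Aᶜ, g y ≤ 0 := setIntegral_nonpos hAmeas.compl fun y _ => hgnonpos y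
    have hA1 : ∫ y in A, g y ≤ (-(2*M)/(5*R)^p) * (volume A).toReal := by
      calc ∫ y in A, g y ≤ ∫ _ in A, (-(2*M)/(5*R)^p) :=
            setIntegral_mono_on hgint.integrableOn (integrableOn_const hAfin.ne) hAmeas hgA
        _ = (volume A).toReal • (-(2*M)/(5*R)^p) := by rw [setIntegral_const]; rfl
        _ = (-(2*M)/(5*R)^p) * (volume A).toReal := by rw [smul_eq_mul]; ring
    have hneg : (-(2*M)/(5*R)^p) * (volume A).toReal < 0 :=
      mul_neg_of_neg_of_pos
        (div_neg_of_neg_of_pos (by linarith) (Real.rpow_pos_of_pos (by linarith) p)) hvol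
    linarith
  -- bounds on the operators
  have hLop : ∀ μs : {μ : Eu n → ℝ // IsAdmissibleKernel n lam Lam μ},
      (1-s) * (Lam * ∫ y, g y) ≤ Lop n s μs.1 φ x₀ ∧
      Lop n s μs.1 φ x₀ ≤ (1-s) * (lam * ∫ y, g y) := by
    rintro ⟨μ, hμ⟩
    have hint := hkint μ hμ
    have hub : ∫ y, kernIntegrand n s μ φ x₀ y ≤ lam * ∫ y, g y := by
      rw [← integral_const_mul]
      exact integral_mono hint (hgint.const_mul lam) fun y => (hker μ hμ y).2
    have hlb : Lam * ∫ y, g y ≤ ∫ y, kernIntegrand n s μ φ x₀ y := by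
      rw [← integral_const_mul]
      exact integral_mono (hgint.const_mul Lam) hint fun y => (hker μ hμ y).1
    have h1s : (0:ℝ) ≤ 1 - s := by linarith
    constructor
    · calc (1-s) * (Lam * ∫ y, g y) ≤ (1-s) * ∫ y, kernIntegrand n s μ φ x₀ y :=
            mul_le_mul_of_nonneg_left hlb h1s
        _ = Lop n s μ φ x₀ := rfl
    · calc Lop n s μ φ x₀ = (1-s) * ∫ y, kernIntegrand n s μ φ x₀ y := rfl
        _ ≤ (1-s) * (lam * ∫ y, g y) := mul_le_mul_of_nonneg_left hub h1s
  have hadm0 : IsAdmissibleKernel n lam Lam (fun _ => lam) :=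
    ⟨measurable_const, fun θ _ => ⟨le_rfl, hlamLam⟩, fun θ => rfl⟩
  have hbdd : BddBelow (Set.range fun μs : {μ : Eu n → ℝ // IsAdmissibleKernel n lam Lam μ} =>
      Lop n s μs.1 φ x₀) := by
    refine ⟨(1-s) * (Lam * ∫ y, g y), ?_⟩
    rintro x ⟨μs, rfl⟩
    exact (hLop μs).1
  have hPle : PucciInf n s lam Lam φ x₀ ≤ (1-s) * (lam * ∫ y, g y) :=
    le_trans (ciInf_le hbdd ⟨fun _ => lam, hadm0⟩) (hLop _).2
  have hPneg : PucciInf n s lam Lam φ x₀ < 0 :=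
    lt_of_le_of_lt hPle
      (mul_neg_of_pos_of_neg (show (0:ℝ) < 1 - s by linarith) (mul_neg_of_pos_of_neg hlam hIg))
  have happ := hsub x₀ hx₀Ω φ hφL1 hφ2.contDiffAt hφx₀ hφge
  have happ' : -(a x₀ * u x₀ ^ q) ≤ PucciInf n s lam Lam φ x₀ := happ
  have hpos : 0 < a x₀ * u x₀ ^ q := by linarith
  have hMq : 0 < u x₀ ^ q := Real.rpow_pos_of_pos hMpos q
  nlinarith
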